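/- arXiv:1807.10809 — 5 statements merged into one kernel-verified Lean document; each statement's English description precedes it below -/
import Mathlib

section
/- For all real numbers x1 > 0, x2 > 0 and all real a, the inequality ((1-a)^2/2)(1 + 1/x1) + ((1+a)^2/2)(1 + 1/x2) - (1 + 2/(x1+x2)) ≥ a^2 holds. -/
theorem stmt_0 (x1 x2 a : ℝ) (hx1 : 0 < x1) (hx2 : 0 < x2) :
    (1 - a)^2 / 2 * (1 + 1 / x1) + (1 + a)^2 / 2 * (1 + 1 / x2)
      - (1 + 2 / (x1 + x2)) ≥ a^2 := by
  have hs : 0 < x1 + x2 := by linarith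
  rw [ge_iff_le, ← sub_nonneg]
  have key : (1 - a)^2 / 2 * (1 + 1 / x1) + (1 + a)^2 / 2 * (1 + 1 / x2)
      - (1 + 2 / (x1 + x2)) - a^2
      = ((1-a)^2 * x2 * (x1+x2) + (1+a)^2 * x1 * (x1+x2) - 4 * x1 * x2)
        / (2 * x1 * x2 * (x1+x2)) := by
    field_simp
    ring
  rw [key]
  apply div_nonneg _ (by positivity)
  nlinarith [sq_nonneg (x1 - x2 + a*(x1+x2)), sq_nonneg (x1-x2), sq_nonneg a, mul_pos hx1 hx2]
end

section
/- Let 2/3 < p ≤ 1 and define g̃(q) = 1 + p(2-p)/((3p-2)(3p-2q)) for q ∈ [0,1]. Then for all q1, q2 ∈ [0,1] and all real a, ((1-a)^2/2) g̃(q1) + ((1+a)^2/2) g̃(q2) - g̃((q1+q2)/2) ≥ a^2. -/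
/-- `gt' p q = 1 + p(2-p)/((3p-2)(3p-2q))` -/
noncomputable def gt' (p q : ℝ) : ℝ := 1 + p * (2 - p) / ((3 * p - 2) * (3 * p - 2 * q))

lemma aux_key (c d x1 x2 a : ℝ) (hc : 0 < c) (hd : 0 < d) (hx1 : 0 < x1) (hx2 : 0 < x2) :
    (1 - a)^2 / 2 * (1 + c / (d * x1)) + (1 + a)^2 / 2 * (1 + c / (d * x2))
      - (1 + c / (d * ((x1 + x2) / 2))) - a^2
      = c * ((x1 + x2) * a + (x1 - x2))^2 / (2 * x1 * x2 * (x1 + x2) * d) := by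
  field_simp
  ring

theorem stmt_1 (p : ℝ) (hp1 : 2 / 3 < p) (hp2 : p ≤ 1)
    (q1 q2 : ℝ) (hq1 : q1 ∈ Set.Icc (0:ℝ) 1) (hq2 : q2 ∈ Set.Icc (0:ℝ) 1) (a : ℝ) :
    (1 - a)^2 / 2 * gt' p q1 + (1 + a)^2 / 2 * gt' p q2 - gt' p ((q1 + q2) / 2) ≥ a^2 := by
  obtain ⟨hq1a, hq1b⟩ := hq1
  obtain ⟨hq2a, hq2b⟩ := hq2
  have hd : (0:ℝ) < 3 * p - 2 := by linarith
  have hx1 : (0:ℝ) < 3 * p - 2 * q1 := by linarith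
  have hx2 : (0:ℝ) < 3 * p - 2 * q2 := by linarith
  have hc : (0:ℝ) < p * (2 - p) := by nlinarith
  have hm : 3 * p - 2 * ((q1 + q2) / 2) = ((3 * p - 2 * q1) + (3 * p - 2 * q2)) / 2 := by ring
  unfold gt'
  rw [ge_iff_le, ← sub_nonneg, hm,
    aux_key (p * (2 - p)) (3 * p - 2) (3 * p - 2 * q1) (3 * p - 2 * q2) a hc hd hx1 hx2]
  positivity
end

section
/- Let 2/3 < p ≤ 1 and define g on [0,1] by g(q) = 1 + p(2-p)/((3p-2)(3p-2q)) for q ≥ p and g(q) = g(p)·q/p for q ≤ p. Then g is convex on [0,1]. -/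
/-- `g p q` equals `gt' p q` for `q ≥ p` and is linear, `g(p)·q/p`, for `q ≤ p`. -/
noncomputable def g (p q : ℝ) : ℝ := if q ≤ p then gt' p p * q / p else gt' p q

lemma gt'_pp (p : ℝ) (hp1 : 2 / 3 < p) : gt' p p = 2 * p / (3 * p - 2) := by
  have h1 : (3 * p - 2) ≠ 0 := by nlinarith
  have h2 : 3 * p - 2 * p ≠ 0 := by nlinarith
  unfold gt'
  field_simp [sub_ne_zero.mpr (by linarith : p * 3 ≠ 2)]
  ring

lemma gt'_sub (p a b : ℝ) (hp1 : 2 / 3 < p) (ha : a ≤ 1) (hb : b ≤ 1) :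
    gt' p b - gt' p a =
      2 * p * (2 - p) * (b - a) / ((3 * p - 2) * ((3 * p - 2 * a) * (3 * p - 2 * b))) := by
  have h1 : (3 * p - 2) ≠ 0 := by nlinarith
  have h2 : 3 * p - 2 * a ≠ 0 := by nlinarith
  have h3 : 3 * p - 2 * b ≠ 0 := by nlinarith
  unfold gt'
  field_simp [sub_ne_zero.mpr (by linarith : p * 3 ≠ 2), sub_ne_zero.mpr (by linarith : p * 3 ≠ 2 * a), sub_ne_zero.mpr (by linarith : p * 3 ≠ 2 * b)]
  ring

/-- the key inequality: the line `2q/(3p-2)` lies below `gt'` on `[p,1]`. -/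
lemma lemA (p q : ℝ) (hp1 : 2 / 3 < p) (hp2 : p ≤ 1) (hq1 : p ≤ q) (hq2 : q ≤ 1) :
    2 * q / (3 * p - 2) ≤ gt' p q := by
  have hA : (0:ℝ) < 3 * p - 2 := by linarith
  have hB : (0:ℝ) < 3 * p - 2 * q := by linarith
  have key : gt' p q - 2 * q / (3 * p - 2)
      = 4 * (q - p) * (q - (2 * p - 1)) / ((3 * p - 2) * (3 * p - 2 * q)) := by
    unfold gt'
    field_simp [sub_ne_zero.mpr (by linarith : p * 3 ≠ 2), sub_ne_zero.mpr (by linarith : p * 3 ≠ 2 * q)]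
    ring
  have h1 : 0 ≤ 4 * (q - p) * (q - (2 * p - 1)) / ((3 * p - 2) * (3 * p - 2 * q)) := by
    apply div_nonneg _ (le_of_lt (mul_pos hA hB))
    have : 0 ≤ q - p := by linarith
    nlinarith
  linarith

/-- slope monotonicity of gt' on (-∞,1] -/
lemma slope_mono (p a b c : ℝ) (hp1 : 2 / 3 < p) (hp2 : p ≤ 1) (hab : a < b) (hbc : b < c) (hc : c ≤ 1) :
    (gt' p b - gt' p a) / (b - a) ≤ (gt' p c - gt' p b) / (c - b) := by
  have hb : b ≤ 1 := by linarith
  have ha : a ≤ 1 := by linarith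
  have hA : (0:ℝ) < 3 * p - 2 := by linarith
  have hBa : (0:ℝ) < 3 * p - 2 * a := by linarith
  have hBb : (0:ℝ) < 3 * p - 2 * b := by linarith
  have hBc : (0:ℝ) < 3 * p - 2 * c := by linarith
  have hp0 : 0 < p := by linarith
  have h2p : 0 < 2 - p := by nlinarith
  have hK : (0:ℝ) < 2 * p * (2 - p) := by positivity
  rw [gt'_sub p a b hp1 ha hb, gt'_sub p b c hp1 hb hc]
  rw [div_div, div_div]
  rw [div_le_div_iff₀ (mul_pos (mul_pos hA (mul_pos hBa hBb)) (by linarith))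
    (mul_pos (mul_pos hA (mul_pos hBb hBc)) (by linarith))]
  have key : 0 ≤ 2 * p * (2 - p) * (b - a) * (c - b) * (3 * p - 2) * (3 * p - 2 * b) * (c - a) := by
    have h1 : (0:ℝ) ≤ b - a := by linarith
    have h2 : (0:ℝ) ≤ c - b := by linarith
    have h3 : (0:ℝ) ≤ c - a := by linarith
    positivity
  nlinarith [key]

theorem stmt_4 (p : ℝ) (hp1 : 2 / 3 < p) (hp2 : p ≤ 1) :
    ConvexOn ℝ (Set.Icc (0:ℝ) 1) (g p) := by
  have hp0 : 0 < p := by linarith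
  have hA : (0:ℝ) < 3 * p - 2 := by linarith
  apply convexOn_of_slope_mono_adjacent (convex_Icc 0 1)
  rintro x y z ⟨hx0, hx1⟩ ⟨hz0, hz1⟩ hxy hyz
  have hy1 : y ≤ 1 := by linarith
  have hLx : ∀ q : ℝ, gt' p p * q / p = 2 * q / (3 * p - 2) := by
    intro q
    rw [gt'_pp p hp1]
    field_simp
  by_cases hyp : y ≤ p
  · have hxp : x ≤ p := by linarith
    have ex : g p x = 2 * x / (3 * p - 2) := by simp only [g, if_pos hxp, hLx]
    have ey : g p y = 2 * y / (3 * p - 2) := by simp only [g, if_pos hyp, hLx]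
    have hsl : (g p y - g p x) / (y - x) = 2 / (3 * p - 2) := by
      rw [ex, ey]
      rw [div_sub_div_same, div_div]
      rw [div_eq_div_iff (ne_of_gt (mul_pos hA (by linarith : (0:ℝ) < y - x))) (ne_of_gt hA)]
      ring
    rw [hsl]
    by_cases hzp : z ≤ p
    · have ez : g p z = 2 * z / (3 * p - 2) := by simp only [g, if_pos hzp, hLx]
      rw [ez, ey]
      rw [div_sub_div_same, div_div]
      rw [div_le_div_iff₀ hA (mul_pos hA (by linarith : (0:ℝ) < z - y))]
      nlinarith
    · push_neg at hzp
      have ez : g p z = gt' p z := by simp only [g, if_neg (not_le.2 hzp)]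
      rw [ez, ey]
      rw [div_le_div_iff₀ (by positivity) (by linarith)]
      have h1 := lemA p z hp1 hp2 hzp.le hz1
      have h2 : 2 * z / (3 * p - 2) - 2 * y / (3 * p - 2) = 2 * (z - y) / (3 * p - 2) := by
        ring
      have hid : (2 * z / (3 * p - 2) - 2 * y / (3 * p - 2)) * (3 * p - 2) = 2 * (z - y) := by
        field_simp
      nlinarith [mul_le_mul_of_nonneg_right
        (by linarith : 2 * z / (3 * p - 2) - 2 * y / (3 * p - 2) ≤ gt' p z - 2 * y / (3 * p - 2))
        hA.le]
  · push_neg at hyp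
    have hzp : ¬ z ≤ p := by push_neg; linarith
    have ey : g p y = gt' p y := by simp only [g, if_neg (not_le.2 hyp)]
    have ez : g p z = gt' p z := by simp only [g, if_neg hzp]
    rw [ey, ez]
    by_cases hxp : x ≤ p
    · have exx : g p x = 2 * x / (3 * p - 2) := by simp only [g, if_pos hxp, hLx]
      rw [exx]
      have step2 : (gt' p y - gt' p p) / (y - p) ≤ (gt' p z - gt' p y) / (z - y) :=
        slope_mono p p y z hp1 hp2 hyp hyz hz1
      have step1 : (gt' p y - 2 * x / (3 * p - 2)) / (y - x) ≤ (gt' p y - gt' p p) / (y - p) := by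
        rw [div_le_div_iff₀ (by linarith) (by linarith)]
        have hLy := lemA p y hp1 hp2 hyp.le hy1
        have hpp : gt' p p = 2 * p / (3 * p - 2) := gt'_pp p hp1
        rw [hpp]
        have id3 : (gt' p y - 2 * p / (3 * p - 2)) * (y - x)
            - (gt' p y - 2 * x / (3 * p - 2)) * (y - p)
            = (p - x) * (gt' p y - 2 * y / (3 * p - 2)) := by ring
        nlinarith [mul_nonneg (by linarith : (0:ℝ) ≤ p - x) (by linarith : (0:ℝ) ≤ gt' p y - 2 * y / (3 * p - 2))]
      linarith
    · push_neg at hxp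
      have exx : g p x = gt' p x := by simp only [g, if_neg (not_le.2 hxp)]
      rw [exx]
      exact slope_mono p x y z hp1 hp2 hxy hyz hz1
end

section
/- Let 2/3 < p ≤ 1 and define g as above. Then for all q1, q2 ∈ [0,1] with (q1+q2)/2 ≥ p and all real a, ((1-a)^2/2) g(q1) + ((1+a)^2/2) g(q2) - g((q1+q2)/2) ≥ a^2. Moreover, the inequality with a = 0 holds for all q1, q2 ∈ [0,1]. -/
set_option maxHeartbeats 1000000 in
lemma lemA_s6 (p : ℝ) (hp1 : 2 / 3 < p) (hp2 : p ≤ 1) {q1 q2 : ℝ}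
    (h1 : q1 ≤ 1) (h2 : q2 ≤ 1) (a : ℝ) :
    (1 - a)^2 / 2 * gt' p q1 + (1 + a)^2 / 2 * gt' p q2 - gt' p ((q1 + q2) / 2) ≥ a^2 := by
  have h32 : 3 * p - 2 > 0 := by linarith
  have hd1 : 3 * p - 2 * q1 > 0 := by linarith
  have hd2 : 3 * p - 2 * q2 > 0 := by linarith
  have hdm : 3 * p - 2 * ((q1 + q2) / 2) > 0 := by linarith
  have hc : p * (2 - p) > 0 := by nlinarith
  have hA1 : p * (2 - p) / ((3 * p - 2) * (3 * p - 2 * q1)) * ((3 * p - 2) * (3 * p - 2 * q1))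
      = p * (2 - p) := div_mul_cancel₀ _ (by positivity)
  have hA2 : p * (2 - p) / ((3 * p - 2) * (3 * p - 2 * q2)) * ((3 * p - 2) * (3 * p - 2 * q2))
      = p * (2 - p) := div_mul_cancel₀ _ (by positivity)
  have hA3 : p * (2 - p) / ((3 * p - 2) * (3 * p - 2 * ((q1 + q2) / 2)))
      * ((3 * p - 2) * (3 * p - 2 * ((q1 + q2) / 2))) = p * (2 - p) :=
    div_mul_cancel₀ _ (by positivity)
  have key : ((1 - a)^2 / 2 * gt' p q1 + (1 + a)^2 / 2 * gt' p q2 - gt' p ((q1 + q2) / 2) - a^2)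
      * (2 * (3*p-2*q1) * (3*p-2*q2) * ((3*p-2*q1)+(3*p-2*q2)) * (3*p-2))
      = p * (2-p) * (((3*p-2*q1)+(3*p-2*q2)) * a + ((3*p-2*q1)-(3*p-2*q2)))^2 := by
    simp only [gt']
    linear_combination ((1 - a)^2 / 2 * (2 * (3*p-2*q2) * ((3*p-2*q1)+(3*p-2*q2)))) * hA1
      + ((1 + a)^2 / 2 * (2 * (3*p-2*q1) * ((3*p-2*q1)+(3*p-2*q2)))) * hA2
      - (4 * (3*p-2*q1) * (3*p-2*q2)) * hA3
  have hD : (2 * (3*p-2*q1) * (3*p-2*q2) * ((3*p-2*q1)+(3*p-2*q2)) * (3*p-2)) > 0 := by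
    positivity
  nlinarith [key, hD, mul_nonneg hc.le
    (sq_nonneg (((3*p-2*q1)+(3*p-2*q2)) * a + ((3*p-2*q1)-(3*p-2*q2))))]

lemma lemKey (p : ℝ) (hp1 : 2 / 3 < p) (hp2 : p ≤ 1) {q : ℝ} (hq : q ≤ 1) :
    (gt' p p * q / p - gt' p q) * ((3*p-2) * (3*p-2*q)) = 4 * (p - q) * (q - (2*p-1)) := by
  have h32 : (3*p-2) ≠ 0 := by intro h; nlinarith
  have hp : p ≠ 0 := by intro h; nlinarith
  have hd : (3*p-2*q) ≠ 0 := by intro h; nlinarith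
  have hdp : (3*p-2*p) ≠ 0 := by intro h; nlinarith
  have h32' : p*3-2 ≠ 0 := by intro h; nlinarith
  have hd' : p*3-2*q ≠ 0 := by intro h; nlinarith
  unfold gt'
  field_simp
  ring

lemma gLB (p : ℝ) (hp1 : 2 / 3 < p) (hp2 : p ≤ 1) {q : ℝ} (hq0 : 2*p - 1 ≤ q) (hq1 : q ≤ 1) :
    g p q ≥ gt' p q := by
  unfold g
  split
  · rename_i hqp
    have h32 : 3*p-2 > 0 := by linarith
    have hd : 3*p - 2*q > 0 := by linarith
    have key := lemKey p hp1 hp2 hq1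
    nlinarith [mul_pos h32 hd, mul_nonneg (by linarith : (0:ℝ) ≤ p - q)
      (by linarith : (0:ℝ) ≤ q - (2*p-1))]
  · exact le_refl _

lemma gLin (p : ℝ) (hp1 : 2 / 3 < p) (hp2 : p ≤ 1) {q : ℝ} (hq1 : q ≤ 1) :
    g p q ≥ gt' p p * q / p := by
  unfold g
  split
  · exact le_refl _
  · rename_i hqp
    push_neg at hqp
    have h32 : 3*p-2 > 0 := by linarith
    have hd : 3*p - 2*q > 0 := by linarith
    have key := lemKey p hp1 hp2 hq1
    nlinarith [mul_pos h32 hd, mul_nonneg (by linarith : (0:ℝ) ≤ q - p)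
      (by linarith : (0:ℝ) ≤ q - (2*p-1))]

lemma gEqHi (p : ℝ) (hp1 : 2 / 3 < p) {m : ℝ} (hm : p ≤ m) :
    g p m = gt' p m := by
  unfold g
  split
  · rename_i h
    have hmp : m = p := le_antisymm h hm
    subst hmp
    have hp : m ≠ 0 := by intro h'; nlinarith
    rw [mul_div_assoc, div_self hp, mul_one]
  · rfl

theorem stmt_6 (p : ℝ) (hp1 : 2 / 3 < p) (hp2 : p ≤ 1) :
    (∀ q1 ∈ Set.Icc (0:ℝ) 1, ∀ q2 ∈ Set.Icc (0:ℝ) 1, (q1 + q2) / 2 ≥ p → ∀ a : ℝ,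
      (1 - a)^2 / 2 * g p q1 + (1 + a)^2 / 2 * g p q2 - g p ((q1 + q2) / 2) ≥ a^2) ∧
    (∀ q1 ∈ Set.Icc (0:ℝ) 1, ∀ q2 ∈ Set.Icc (0:ℝ) 1,
      (1 - (0:ℝ))^2 / 2 * g p q1 + (1 + (0:ℝ))^2 / 2 * g p q2 - g p ((q1 + q2) / 2)
        ≥ (0:ℝ)^2) := by
  constructor
  · rintro q1 ⟨hq10, hq11⟩ q2 ⟨hq20, hq21⟩ hmean a
    have hq1lb : 2*p - 1 ≤ q1 := by linarith
    have hq2lb : 2*p - 1 ≤ q2 := by linarith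
    have h1 := gLB p hp1 hp2 hq1lb hq11
    have h2 := gLB p hp1 hp2 hq2lb hq21
    have hm : g p ((q1 + q2) / 2) = gt' p ((q1 + q2) / 2) :=
      gEqHi p hp1 (by linarith)
    have hA := lemA_s6 p hp1 hp2 hq11 hq21 a
    have c1 : (0:ℝ) ≤ (1 - a)^2 / 2 := by positivity
    have c2 : (0:ℝ) ≤ (1 + a)^2 / 2 := by positivity
    nlinarith [mul_le_mul_of_nonneg_left h1 c1, mul_le_mul_of_nonneg_left h2 c2]
  · rintro q1 ⟨hq10, hq11⟩ q2 ⟨hq20, hq21⟩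
    norm_num
    by_cases hmp : (q1 + q2) / 2 ≤ p
    · have hm : g p ((q1 + q2) / 2) = gt' p p * ((q1 + q2) / 2) / p := by
        unfold g; rw [if_pos hmp]
      have h1 := gLin p hp1 hp2 hq11
      have h2 := gLin p hp1 hp2 hq21
      have e : gt' p p * ((q1 + q2) / 2) / p
          = (gt' p p * q1 / p + gt' p p * q2 / p) / 2 := by ring
      rw [hm, e]
      linarith
    · push_neg at hmp
      have hq1lb : 2*p - 1 ≤ q1 := by linarith
      have hq2lb : 2*p - 1 ≤ q2 := by linarith
      have h1 := gLB p hp1 hp2 hq1lb hq11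
      have h2 := gLB p hp1 hp2 hq2lb hq21
      have hm : g p ((q1 + q2) / 2) = gt' p ((q1 + q2) / 2) :=
        gEqHi p hp1 (by linarith)
      have hA := lemA_s6 p hp1 hp2 hq11 hq21 0
      rw [hm]
      nlinarith [hA]
end

section
/- Let 2/3 < p ≤ 1, define g as above, and let q1, q2 ∈ [0,1] with (q1+q2)/2 ≥ p. Then for all real numbers a and b, ((b-a)^2/2) g(q1) + ((b+a)^2/2) g(q2) - b^2 g((q1+q2)/2) ≥ ((q1+q2)/2) a^2. -/
set_option maxHeartbeats 1000000

/-- On `[2p-1, 1]` the function `g` dominates `gt'`. -/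
lemma g_ge_gt' (p q : ℝ) (hp1 : 2 / 3 < p) (hp2 : p ≤ 1)
    (h1 : 2 * p - 1 ≤ q) (h2 : q ≤ 1) : gt' p q ≤ g p q := by
  have ht : (0:ℝ) < 3 * p - 2 := by linarith
  have hs : (0:ℝ) < 3 * p - 2 * q := by linarith
  have hp0 : (0:ℝ) < p := by linarith
  unfold g gt'
  split_ifs with h
  · -- linear branch: q ≤ p
    rw [le_div_iff₀ hp0, ← sub_nonneg]
    have hx : (1 + p * (2 - p) / ((3 * p - 2) * (3 * p - 2 * p))) * q
        - (1 + p * (2 - p) / ((3 * p - 2) * (3 * p - 2 * q))) * p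
        = p * (4 * (q - (2 * p - 1)) * (p - q)) / ((3 * p - 2) * (3 * p - 2 * q)) := by
      have hpp : (0:ℝ) < 3 * p - 2 * p := by linarith
      have : p * 3 - 2 ≠ 0 := by linarith
      have : p * 3 - 2 * q ≠ 0 := by linarith
      field_simp
      ring
    rw [hx]
    apply div_nonneg _ (by positivity)
    have := mul_nonneg (sub_nonneg.mpr h1) (sub_nonneg.mpr h)
    nlinarith [this]
  · exact le_refl _

/-- Pure algebra: nonnegativity of the cleared-denominator quadratic form. -/
lemma Y_nonneg (c t s1 s2 sm m a b : ℝ) (hc : 0 < c) (ht : 0 < t)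
    (hs1 : 0 < s1) (hs2 : 0 < s2) (hsm : 0 < sm) (hm : m ≤ 1) :
    0 ≤ 4 * sm * ((1 - m) * t * s1 * s2 + c * sm) * a^2
      + 4 * sm * c * (s1 - s2) * (a * b) + c * (s1 - s2)^2 * b^2 := by
  have hA' : 0 < (1 - m) * t * s1 * s2 + c * sm := by
    have h1 : 0 ≤ (1 - m) * t * s1 * s2 := by
      have : (0:ℝ) ≤ 1 - m := by linarith
      positivity
    nlinarith [mul_pos hc hsm]
  have hident : ((1 - m) * t * s1 * s2 + c * sm) *
      (4 * sm * ((1 - m) * t * s1 * s2 + c * sm) * a^2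
        + 4 * sm * c * (s1 - s2) * (a * b) + c * (s1 - s2)^2 * b^2)
      = sm * (2 * ((1 - m) * t * s1 * s2 + c * sm) * a + c * (s1 - s2) * b)^2
        + c * (1 - m) * t * s1 * s2 * (s1 - s2)^2 * b^2 := by ring
  have hterm2 : 0 ≤ c * (1 - m) * t * s1 * s2 * (s1 - s2)^2 * b^2 := by
    have h1m : (0:ℝ) ≤ 1 - m := by linarith
    positivity
  have hterm1 : 0 ≤ sm * (2 * ((1 - m) * t * s1 * s2 + c * sm) * a + c * (s1 - s2) * b)^2 :=
    mul_nonneg hsm.le (sq_nonneg _)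
  nlinarith [hA', hident, hterm1, hterm2]

theorem stmt_8 (p : ℝ) (hp1 : 2 / 3 < p) (hp2 : p ≤ 1)
    (q1 q2 : ℝ) (hq1 : q1 ∈ Set.Icc (0:ℝ) 1) (hq2 : q2 ∈ Set.Icc (0:ℝ) 1)
    (hmean : (q1 + q2) / 2 ≥ p) (a b : ℝ) :
    (b - a)^2 / 2 * g p q1 + (b + a)^2 / 2 * g p q2 - b^2 * g p ((q1 + q2) / 2)
      ≥ (q1 + q2) / 2 * a^2 := by
  obtain ⟨hq10, hq11⟩ := hq1
  obtain ⟨hq20, hq21⟩ := hq2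
  have hp0 : (0:ℝ) < p := by linarith
  have ht : (0:ℝ) < 3 * p - 2 := by linarith
  have hs1 : (0:ℝ) < 3 * p - 2 * q1 := by linarith
  have hs2 : (0:ℝ) < 3 * p - 2 * q2 := by linarith
  have hsm : (0:ℝ) < 3 * p - q1 - q2 := by linarith
  have hc : (0:ℝ) < p * (2 - p) := by nlinarith
  have hm1 : (q1 + q2) / 2 ≤ 1 := by linarith
  -- g at the mean equals gt' at the mean
  have hgm : g p ((q1 + q2) / 2) = gt' p ((q1 + q2) / 2) := by
    unfold g
    split_ifs with h
    · have hme : (q1 + q2) / 2 = p := le_antisymm h hmean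
      rw [hme, mul_div_assoc, div_self hp0.ne', mul_one]
    · rfl
  -- lower bounds at q1 and q2
  have hg1 : gt' p q1 ≤ g p q1 := g_ge_gt' p q1 hp1 hp2 (by linarith) hq11
  have hg2 : gt' p q2 ≤ g p q2 := g_ge_gt' p q2 hp1 hp2 (by linarith) hq21
  -- the key inequality with gt' in place of g
  have key : (b - a)^2 / 2 * gt' p q1 + (b + a)^2 / 2 * gt' p q2
      - b^2 * gt' p ((q1 + q2) / 2) ≥ (q1 + q2) / 2 * a^2 := by
    have hY := Y_nonneg (p * (2 - p)) (3 * p - 2) (3 * p - 2 * q1) (3 * p - 2 * q2)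
      (3 * p - q1 - q2) ((q1 + q2) / 2) a b hc ht hs1 hs2 hsm hm1
    rw [ge_iff_le, ← sub_nonneg]
    have hXY : (b - a)^2 / 2 * gt' p q1 + (b + a)^2 / 2 * gt' p q2
        - b^2 * gt' p ((q1 + q2) / 2) - (q1 + q2) / 2 * a^2
        = (4 * (3 * p - q1 - q2) * ((1 - (q1 + q2) / 2) * (3 * p - 2) * (3 * p - 2 * q1)
              * (3 * p - 2 * q2) + p * (2 - p) * (3 * p - q1 - q2)) * a^2
            + 4 * (3 * p - q1 - q2) * (p * (2 - p)) * ((3 * p - 2 * q1) - (3 * p - 2 * q2))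
              * (a * b)
            + p * (2 - p) * ((3 * p - 2 * q1) - (3 * p - 2 * q2))^2 * b^2)
          / (4 * (3 * p - 2) * (3 * p - 2 * q1) * (3 * p - 2 * q2) * (3 * p - q1 - q2)) := by
      have hmid : gt' p ((q1 + q2) / 2)
          = 1 + p * (2 - p) / ((3 * p - 2) * (3 * p - q1 - q2)) := by
        unfold gt'
        norm_num
        ring_nf
      rw [hmid]
      unfold gt'
      have hne0 : (3 * p - 2) ≠ 0 := ht.ne'
      have hne1 : (3 * p - 2 * q1) ≠ 0 := hs1.ne'
      have hne2 : (3 * p - 2 * q2) ≠ 0 := hs2.ne'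
      have hne3 : (3 * p - q1 - q2) ≠ 0 := hsm.ne'
      have : p * 3 - 2 ≠ 0 := by linarith
      have : p * 3 - 2 * q1 ≠ 0 := by linarith
      have : p * 3 - 2 * q2 ≠ 0 := by linarith
      have : p * 3 - q1 - q2 ≠ 0 := by linarith
      field_simp
      ring
    rw [hXY]
    positivity
  -- combine: g ≥ gt' pointwise with nonnegative weights
  have e1 : (b - a)^2 / 2 * gt' p q1 ≤ (b - a)^2 / 2 * g p q1 :=
    mul_le_mul_of_nonneg_left hg1 (by positivity)
  have e2 : (b + a)^2 / 2 * gt' p q2 ≤ (b + a)^2 / 2 * g p q2 :=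
    mul_le_mul_of_nonneg_left hg2 (by positivity)
  rw [hgm]
  linarith [key, e1, e2]
end
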